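/- For all natural numbers n and t with 1 ≤ t ≤ n, the following identity of rational numbers holds: ∑_{s = t−1}^{n−1} (s!·(n−1−s)!/n!) · binom(n−t, s−t+1) = 1/t. -/

import Mathlib

open Finset

/-- The hockey-stick coefficient computation: for `1 ≤ t ≤ n`,
`∑_{s = t−1}^{n−1} (s!·(n−1−s)!/n!) · C(n−t, s−(t−1)) = 1/t`. -/
theorem shapley_coefficient (n t : ℕ) (ht : 1 ≤ t) (htn : t ≤ n) :
    ∑ s ∈ Finset.Icc (t - 1) (n - 1),
        ((s.factorial * (n - 1 - s).factorial : ℕ) : ℚ) / (n.factorial : ℚ) *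
          (((n - t).choose (s - (t - 1)) : ℕ) : ℚ)
      = 1 / (t : ℚ) := by
  obtain ⟨p, rfl⟩ : ∃ p, t = p + 1 := ⟨t - 1, by omega⟩
  obtain ⟨m, rfl⟩ : ∃ m, n = p + 1 + m := ⟨n - (p + 1), by omega⟩
  have h1 : p + 1 + m - 1 = p + m := by omega
  have h2 : p + 1 + m - (p + 1) = m := by omega
  have h3 : p + 1 - 1 = p := by omega
  rw [h1, h2, h3]
  have hIcc : Finset.Icc p (p + m) = Finset.Ico p (p + m + 1) := by
    rw [Nat.Icc_eq_range', Nat.Ico_eq_range']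
  rw [hIcc, Finset.sum_Ico_eq_sum_range]
  have hrange : p + m + 1 - p = m + 1 := by omega
  rw [hrange]
  have key : ∀ i ∈ Finset.range (m + 1),
      (((p + i).factorial * (p + m - (p + i)).factorial : ℕ) : ℚ) /
          ((p + 1 + m).factorial : ℚ) * ((m.choose (p + i - p) : ℕ) : ℚ)
        = ((p + i).choose p : ℚ) *
            ((p.factorial : ℚ) * (m.factorial : ℚ) / ((p + 1 + m).factorial : ℚ)) := by
    intro i hi
    rw [Finset.mem_range] at hi
    have him : i ≤ m := by omega
    have e1 : p + m - (p + i) = m - i := by omega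
    have e2 : p + i - p = i := by omega
    rw [e1, e2, Nat.cast_choose ℚ him, Nat.cast_choose ℚ (Nat.le_add_right p i |>.trans (le_refl _) : p ≤ p + i)]
    have e3 : p + i - p = i := by omega
    rw [e3]
    have f1 : ((p + i).factorial : ℚ) ≠ 0 := Nat.cast_ne_zero.mpr (Nat.factorial_ne_zero _)
    have f2 : ((m - i).factorial : ℚ) ≠ 0 := Nat.cast_ne_zero.mpr (Nat.factorial_ne_zero _)
    have f3 : ((p + 1 + m).factorial : ℚ) ≠ 0 := Nat.cast_ne_zero.mpr (Nat.factorial_ne_zero _)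
    have f4 : (p.factorial : ℚ) ≠ 0 := Nat.cast_ne_zero.mpr (Nat.factorial_ne_zero _)
    have f5 : (i.factorial : ℚ) ≠ 0 := Nat.cast_ne_zero.mpr (Nat.factorial_ne_zero _)
    have f6 : (m.factorial : ℚ) ≠ 0 := Nat.cast_ne_zero.mpr (Nat.factorial_ne_zero _)
    push_cast
    field_simp
  rw [Finset.sum_congr rfl key, ← Finset.sum_mul]
  have hsum : ∑ i ∈ Finset.range (m + 1), ((p + i).choose p : ℚ)
      = ((p + m + 1).choose (p + 1) : ℚ) := by
    rw [← Nat.cast_sum]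
    norm_cast
    have : ∑ i ∈ Finset.range (m + 1), (p + i).choose p
        = ∑ j ∈ Finset.Icc p (p + m), j.choose p := by
      rw [hIcc, Finset.sum_Ico_eq_sum_range, hrange]
    rw [this, Nat.sum_Icc_choose]
  rw [hsum]
  have hle : p + 1 ≤ p + m + 1 := by omega
  rw [Nat.cast_choose ℚ hle]
  have e4 : p + m + 1 - (p + 1) = m := by omega
  have e5 : p + m + 1 = p + 1 + m := by omega
  rw [e4, e5]
  have f3 : ((p + 1 + m).factorial : ℚ) ≠ 0 := Nat.cast_ne_zero.mpr (Nat.factorial_ne_zero _)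
  have f6 : (m.factorial : ℚ) ≠ 0 := Nat.cast_ne_zero.mpr (Nat.factorial_ne_zero _)
  have f7 : ((p + 1).factorial : ℚ) ≠ 0 := Nat.cast_ne_zero.mpr (Nat.factorial_ne_zero _)
  have hfac : ((p + 1).factorial : ℚ) = (p + 1) * p.factorial := by
    rw [Nat.factorial_succ]; push_cast; ring
  have hp1 : ((p : ℚ) + 1) ≠ 0 := by positivity
  field_simp [hfac]
  ring
  rw [add_comm 1 p, Nat.factorial_succ]; push_cast; ring
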